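/- (Pair representation of P01.) Let Y¹ and Y⁰ be independent random variables, each exponentially distributed with rate 1, let τ¹ be the honest random time on [s,t] associated with the intensity λ1 and driven by Y¹, and let τ⁰ be the honest random time on [s,t] associated with the intensity λ0 and driven by Y⁰. Then P(τ⁰ > τ¹) = P01(s,t); in particular the indicator 1(τ⁰ > τ¹) is an unbiased estimator of P01(s,t). -/

import Mathlib

open MeasureTheory ProbabilityTheory Real Set

/-- The honest random time on `[s,t]` associated with the intensity `lam`,
driven by the value `y`: `max (s, inf {r ∈ [s,t] : ∫_r^t lam ≤ y})`. -/
noncomputable def honestTime (s t : ℝ) (lam : ℝ → ℝ) (y : ℝ) : ℝ :=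
  max s (sInf {r | r ∈ Set.Icc s t ∧ ∫ u in r..t, lam u ≤ y})

section Helpers

variable {s t : ℝ} {lam : ℝ → ℝ}

private lemma primCont (hlam : Continuous lam) (t : ℝ) :
    Continuous (fun r => ∫ u in r..t, lam u) := by
  refine continuous_iff_continuousAt.mpr fun v => ?_
  exact (intervalIntegral.integral_hasDerivAt_left (hlam.intervalIntegrable v t)
    (hlam.stronglyMeasurableAtFilter _ _) hlam.continuousAt).continuousAt

private lemma primAnti (hlam : Continuous lam)
    (hnn : ∀ u ∈ Set.Icc s t, 0 ≤ lam u) {a b : ℝ}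
    (ha : a ∈ Set.Icc s t) (hb : b ∈ Set.Icc s t) (hab : a ≤ b) :
    (∫ u in b..t, lam u) ≤ ∫ u in a..t, lam u := by
  have h1 : (∫ u in a..b, lam u) + ∫ u in b..t, lam u = ∫ u in a..t, lam u :=
    intervalIntegral.integral_add_adjacent_intervals (hlam.intervalIntegrable a b)
      (hlam.intervalIntegrable b t)
  have h2 : 0 ≤ ∫ u in a..b, lam u :=
    intervalIntegral.integral_nonneg hab
      (fun u hu => hnn u ⟨ha.1.trans hu.1, hu.2.trans hb.2⟩)
  linarith

private lemma primNonneg (hnn : ∀ u ∈ Set.Icc s t, 0 ≤ lam u) {w : ℝ}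
    (hw : w ∈ Set.Icc s t) : 0 ≤ ∫ u in w..t, lam u :=
  intervalIntegral.integral_nonneg hw.2 (fun u hu => hnn u ⟨hw.1.trans hu.1, hu.2⟩)

private lemma ht_empty (hnn : ∀ u ∈ Set.Icc s t, 0 ≤ lam u) {y : ℝ} (hy : y < 0) :
    {r | r ∈ Set.Icc s t ∧ (∫ u in r..t, lam u) ≤ y} = ∅ := by
  ext r
  simp only [Set.mem_setOf_eq, Set.mem_empty_iff_false, iff_false, not_and]
  intro hr
  have := primNonneg hnn hr
  intro h; linarith

private lemma ht_of_neg (hs : 0 ≤ s) (hnn : ∀ u ∈ Set.Icc s t, 0 ≤ lam u) {y : ℝ}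
    (hy : y < 0) : honestTime s t lam y = s := by
  rw [honestTime, ht_empty hnn hy, Real.sInf_empty, max_eq_left hs]

private lemma ht_sInf_mem (hst : s ≤ t) (hlam : Continuous lam) {y : ℝ} (hy : 0 ≤ y) :
    sInf {r | r ∈ Set.Icc s t ∧ (∫ u in r..t, lam u) ≤ y}
      ∈ {r | r ∈ Set.Icc s t ∧ (∫ u in r..t, lam u) ≤ y} := by
  have hcl : IsClosed {r | r ∈ Set.Icc s t ∧ (∫ u in r..t, lam u) ≤ y} := by
    have : {r | r ∈ Set.Icc s t ∧ (∫ u in r..t, lam u) ≤ y}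
        = Set.Icc s t ∩ (fun r => ∫ u in r..t, lam u) ⁻¹' (Set.Iic y) := rfl
    rw [this]
    exact isClosed_Icc.inter (isClosed_Iic.preimage (primCont hlam t))
  refine hcl.csInf_mem ⟨t, ⟨⟨hst, le_refl t⟩, ?_⟩⟩ ⟨s, fun r hr => hr.1.1⟩
  rw [intervalIntegral.integral_same]; exact hy

private lemma ht_le (hst : s ≤ t) {w y : ℝ} (hw : w ∈ Set.Icc s t)
    (h : (∫ u in w..t, lam u) ≤ y) : honestTime s t lam y ≤ w :=
  max_le hw.1 (csInf_le ⟨s, fun r hr => hr.1.1⟩ ⟨hw, h⟩)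

private lemma ht_gt (hst : s ≤ t) (hlam : Continuous lam)
    (hnn : ∀ u ∈ Set.Icc s t, 0 ≤ lam u) {w y : ℝ} (hw : w ∈ Set.Icc s t)
    (hy : 0 ≤ y) (h : y < ∫ u in w..t, lam u) : w < honestTime s t lam y := by
  obtain ⟨hm1, hm2⟩ := ht_sInf_mem hst hlam hy (lam := lam)
  have hwm : w < sInf {r | r ∈ Set.Icc s t ∧ (∫ u in r..t, lam u) ≤ y} := by
    by_contra h'
    push_neg at h'
    have := primAnti hlam hnn hm1 hw h'
    linarith
  exact lt_of_lt_of_le hwm (le_max_right _ _)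

private lemma ht_lt (hst : s < t) (hlam : Continuous lam) {v y : ℝ}
    (hv : v ∈ Set.Ioc s t) (h : (∫ u in v..t, lam u) < y) : honestTime s t lam y < v := by
  have hmem : (fun r => ∫ u in r..t, lam u) ⁻¹' (Set.Iio y) ∈ nhds v :=
    (primCont hlam t).continuousAt.preimage_mem_nhds (Iio_mem_nhds h)
  rw [Metric.mem_nhds_iff] at hmem
  obtain ⟨ε, hε, hball⟩ := hmem
  set m := min ε (v - s) with hm
  have hm0 : 0 < m := lt_min hε (by linarith [hv.1])
  have hmε : m ≤ ε := min_le_left _ _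
  have hms : m ≤ v - s := min_le_right _ _
  set v' := v - m / 2 with hv'
  have hv'lt : v' < v := by simp only [hv']; linarith
  have hv's : s ≤ v' := by simp only [hv']; linarith
  have hv't : v' ≤ t := le_of_lt (lt_of_lt_of_le hv'lt hv.2)
  have hball' : v' ∈ Metric.ball v ε := by
    rw [Metric.mem_ball, Real.dist_eq, hv']
    rw [show v - m / 2 - v = -(m / 2) by ring, abs_neg, abs_of_nonneg (by linarith)]
    linarith
  have hv'y : (∫ u in v'..t, lam u) ≤ y := le_of_lt (hball hball')
  exact lt_of_le_of_lt (ht_le hst.le ⟨hv's, hv't⟩ hv'y) hv'lt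

private lemma ht_mem (hs : 0 ≤ s) (hst : s ≤ t) (hlam : Continuous lam)
    (hnn : ∀ u ∈ Set.Icc s t, 0 ≤ lam u) (y : ℝ) :
    honestTime s t lam y ∈ Set.Icc s t := by
  refine ⟨le_max_left _ _, ?_⟩
  rcases lt_or_ge y 0 with hy | hy
  · rw [ht_of_neg hs hnn hy]; exact hst
  · exact max_le hst (ht_sInf_mem hst hlam hy).1.2

private lemma ht_measurable (hs : 0 ≤ s) (hst : s ≤ t) (hlam : Continuous lam)
    (hnn : ∀ u ∈ Set.Icc s t, 0 ≤ lam u) : Measurable (honestTime s t lam) := by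
  have hanti : ∀ a b : ℝ, 0 ≤ a → a ≤ b → honestTime s t lam b ≤ honestTime s t lam a := by
    intro a b ha hab
    refine max_le_max le_rfl (csInf_le_csInf ⟨s, fun r hr => hr.1.1⟩
      ?_ (fun r hr => ⟨hr.1, hr.2.trans hab⟩))
    exact ⟨t, ⟨⟨hst, le_refl t⟩, by rw [intervalIntegral.integral_same]; exact ha⟩⟩
  have hganti : Antitone (fun y => honestTime s t lam (max y 0)) := by
    intro a b hab
    exact hanti (max a 0) (max b 0) (le_max_right _ _) (max_le_max hab le_rfl)
  have heq : honestTime s t lam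
      = fun y => if y < 0 then s else honestTime s t lam (max y 0) := by
    funext y
    rcases lt_or_ge y 0 with hy | hy
    · rw [if_pos hy, ht_of_neg hs hnn hy]
    · rw [if_neg (not_lt.mpr hy), max_eq_left hy]
  rw [heq]
  exact Measurable.ite measurableSet_Iio measurable_const hganti.measurable

private lemma expM_apply {S : Set ℝ} (hS : MeasurableSet S) :
    expMeasure 1 S = ∫⁻ y in S, exponentialPDF 1 y := by
  rw [expMeasure, gammaMeasure, withDensity_apply _ hS]
  rfl

private lemma expM_Iio {c : ℝ} (hc : 0 ≤ c) :
    expMeasure 1 (Set.Iio c) = ENNReal.ofReal (1 - Real.exp (-c)) := by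
  rw [expM_apply measurableSet_Iio, setLIntegral_congr (Iio_ae_eq_Iic (a := c)),
    lintegral_exponentialPDF_eq_antiDeriv one_pos, if_pos hc, one_mul]

private lemma expM_Iio_zero : expMeasure 1 (Set.Iio 0) = 0 := by
  rw [expM_Iio le_rfl]
  simp

private lemma expM_Ici {c : ℝ} (hc : 0 ≤ c) :
    expMeasure 1 (Set.Ici c) = ENNReal.ofReal (Real.exp (-c)) := by
  haveI : IsProbabilityMeasure (expMeasure 1) := isProbabilityMeasure_expMeasure one_pos
  have h1 : Set.Ici c = (Set.Iio c)ᶜ := compl_Iio.symm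
  have he1 : Real.exp (-c) ≤ 1 := Real.exp_le_one_iff.mpr (by linarith)
  rw [h1, measure_compl measurableSet_Iio (measure_ne_top _ _), measure_univ, expM_Iio hc,
    show (1 : ENNReal) = ENNReal.ofReal 1 from ENNReal.ofReal_one.symm,
    ← ENNReal.ofReal_sub 1 (by linarith : (0:ℝ) ≤ 1 - Real.exp (-c))]
  congr 1
  ring

private lemma expM_Ioi {c : ℝ} (hc : 0 ≤ c) :
    expMeasure 1 (Set.Ioi c) = ENNReal.ofReal (Real.exp (-c)) := by
  have h0 : expMeasure 1 {c} = 0 :=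
    withDensity_absolutelyContinuous volume (gammaPDF 1 1) (Real.volume_singleton)
  refine le_antisymm ((measure_mono Set.Ioi_subset_Ici_self).trans (expM_Ici hc).le) ?_
  calc ENNReal.ofReal (Real.exp (-c)) = expMeasure 1 (Set.Ici c) := (expM_Ici hc).symm
    _ ≤ expMeasure 1 (Set.Ioi c ∪ {c}) := by
        refine measure_mono fun x hx => ?_
        rcases lt_or_eq_of_le (Set.mem_Ici.mp hx) with h | h
        · exact Or.inl h
        · exact Or.inr (by simp [h.symm])
    _ ≤ expMeasure 1 (Set.Ioi c) + expMeasure 1 {c} := measure_union_le _ _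
    _ = expMeasure 1 (Set.Ioi c) := by rw [h0, add_zero]

private lemma ftc (hlam : Continuous lam) {w : ℝ} (hw : w ≤ t) :
    (∫ v in w..t, lam v * Real.exp (-(∫ u in v..t, lam u)))
      = 1 - Real.exp (-(∫ u in w..t, lam u)) := by
  have hderiv : ∀ v ∈ Set.uIcc w t,
      HasDerivAt (fun r => Real.exp (-(∫ u in r..t, lam u)))
        (lam v * Real.exp (-(∫ u in v..t, lam u))) v := by
    intro v _
    have h1 : HasDerivAt (fun r => ∫ u in r..t, lam u) (-lam v) v :=
      intervalIntegral.integral_hasDerivAt_left (hlam.intervalIntegrable v t)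
        (hlam.stronglyMeasurableAtFilter _ _) hlam.continuousAt
    have h2 := (h1.neg).exp
    convert h2 using 1
    · exact rfl
    · simp only [Pi.neg_apply, neg_neg]
      ring
  have hcont : Continuous fun v => lam v * Real.exp (-(∫ u in v..t, lam u)) :=
    hlam.mul (Real.continuous_exp.comp (primCont hlam t).neg)
  rw [intervalIntegral.integral_eq_sub_of_hasDerivAt hderiv (hcont.intervalIntegrable w t),
    intervalIntegral.integral_same]
  simp

end Helpers

/-- Pair representation of `P₀₁`: with `τ¹`, `τ⁰` the honest times on `[s,t]` associated
with `λ₁`, `λ₀`, driven by independent `Exp(1)` random variables,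
`P(τ⁰ > τ¹) = P₀₁(s,t) = ∫_s^t exp (-∫_v^t (λ₀+λ₁)(r) dr) λ₀(v) dv`;
the indicator `1(τ⁰ > τ¹)` is an unbiased estimator of `P₀₁(s,t)`. -/
theorem pair_representation_P01
    {Ω : Type*} [MeasurableSpace Ω] (P : Measure Ω) [IsProbabilityMeasure P]
    (s t : ℝ) (hs : 0 ≤ s) (hst : s < t)
    (lam0 lam1 : ℝ → ℝ) (hlam0 : Continuous lam0) (hlam1 : Continuous lam1)
    (hlam0_nonneg : ∀ u ∈ Set.Icc s t, 0 ≤ lam0 u)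
    (hlam1_nonneg : ∀ u ∈ Set.Icc s t, 0 ≤ lam1 u)
    (Y1 Y0 : Ω → ℝ) (hY1 : Measurable Y1) (hY0 : Measurable Y0)
    (hY1law : P.map Y1 = expMeasure 1) (hY0law : P.map Y0 = expMeasure 1)
    (hindep : IndepFun Y1 Y0 P) :
    P {ω | honestTime s t lam0 (Y0 ω) > honestTime s t lam1 (Y1 ω)}
      = ENNReal.ofReal
          (∫ v in s..t, Real.exp (-(∫ r in v..t, (lam0 r + lam1 r))) * lam0 v) := by
  haveI : IsProbabilityMeasure (expMeasure 1) := isProbabilityMeasure_expMeasure one_pos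
  set μ := expMeasure 1 with hμdef
  set τ0 := honestTime s t lam0 with hτ0
  set τ1 := honestTime s t lam1 with hτ1
  have hst' : s ≤ t := hst.le
  have hmτ0 : Measurable τ0 := ht_measurable hs hst' hlam0 hlam0_nonneg
  have hmτ1 : Measurable τ1 := ht_measurable hs hst' hlam1 hlam1_nonneg
  set G : ℝ → ENNReal :=
    fun v => ENNReal.ofReal (lam0 v * Real.exp (-(∫ u in v..t, lam0 u))) with hG
  have hmG : Measurable G :=
    (hlam0.mul (Real.continuous_exp.comp (primCont hlam0 t).neg)).measurable.ennreal_ofReal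
  have hE : MeasurableSet {q : ℝ × ℝ | τ1 q.1 < τ0 q.2} :=
    measurableSet_lt (hmτ1.comp measurable_fst) (hmτ0.comp measurable_snd)
  have hmap : P.map (fun ω => (Y1 ω, Y0 ω)) = μ.prod μ := by
    exact ((indepFun_iff_map_prod_eq_prod_map_map hY1.aemeasurable hY0.aemeasurable).mp
      hindep).trans (by rw [hY1law, hY0law])
  have step1 : P {ω | τ0 (Y0 ω) > τ1 (Y1 ω)} = (μ.prod μ) {q : ℝ × ℝ | τ1 q.1 < τ0 q.2} := by
    rw [← hmap, Measure.map_apply (hY1.prodMk hY0) hE]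
    rfl
  -- Step 2 : section measure in y0
  have step2 : ∀ y1 : ℝ, μ (Prod.mk y1 ⁻¹' {q : ℝ × ℝ | τ1 q.1 < τ0 q.2})
      = ∫⁻ v in Set.Ioc s t, (Set.Ioi (τ1 y1)).indicator G v := by
    intro y1
    have hw : τ1 y1 ∈ Set.Icc s t := ht_mem hs hst' hlam1 hlam1_nonneg y1
    set w := τ1 y1 with hwdef
    set c := ∫ u in w..t, lam0 u with hc
    have hc0 : 0 ≤ c := primNonneg hlam0_nonneg hw
    have hpre : Prod.mk y1 ⁻¹' {q : ℝ × ℝ | τ1 q.1 < τ0 q.2} = {y0 | w < τ0 y0} := rfl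
    have hsub1 : Set.Ico 0 c ⊆ {y0 | w < τ0 y0} :=
      fun y0 hy0 => ht_gt hst' hlam0 hlam0_nonneg hw hy0.1 hy0.2
    have hsub2 : {y0 | w < τ0 y0} ⊆ Set.Iio c := by
      intro y0 hy0
      by_contra h
      simp only [Set.mem_Iio, not_lt] at h
      exact absurd (ht_le hst' hw h) (not_le.mpr hy0)
    have h1 : μ (Set.Iio c) ≤ μ (Set.Ico 0 c) := by
      calc μ (Set.Iio c) ≤ μ (Set.Ico 0 c ∪ Set.Iio 0) := by
            refine measure_mono fun x hx => ?_
            rcases le_or_gt 0 x with h | h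
            · exact Or.inl ⟨h, hx⟩
            · exact Or.inr h
        _ ≤ μ (Set.Ico 0 c) + μ (Set.Iio 0) := measure_union_le _ _
        _ = μ (Set.Ico 0 c) := by rw [hμdef, expM_Iio_zero, add_zero]
    have hmeas_val : μ {y0 | w < τ0 y0} = ENNReal.ofReal (1 - Real.exp (-c)) := by
      have : μ {y0 | w < τ0 y0} = μ (Set.Iio c) :=
        le_antisymm (measure_mono hsub2) (h1.trans (measure_mono hsub1))
      rw [this, hμdef, expM_Iio hc0]
    have hftc : (1 : ℝ) - Real.exp (-c)
        = ∫ v in w..t, lam0 v * Real.exp (-(∫ u in v..t, lam0 u)) := (ftc hlam0 hw.2).symm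
    have hIoc : (∫ v in w..t, lam0 v * Real.exp (-(∫ u in v..t, lam0 u)))
        = ∫ v in Set.Ioc w t, lam0 v * Real.exp (-(∫ u in v..t, lam0 u)) :=
      intervalIntegral.integral_of_le hw.2
    have hint : IntegrableOn (fun v => lam0 v * Real.exp (-(∫ u in v..t, lam0 u)))
        (Set.Ioc w t) volume :=
      ((hlam0.mul (Real.continuous_exp.comp (primCont hlam0 t).neg)).integrableOn_Icc).mono_set
        Set.Ioc_subset_Icc_self
    have hnn : 0 ≤ᵐ[volume.restrict (Set.Ioc w t)]
        fun v => lam0 v * Real.exp (-(∫ u in v..t, lam0 u)) := by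
      refine (ae_restrict_iff' measurableSet_Ioc).mpr (ae_of_all _ fun v hv => ?_)
      exact mul_nonneg (hlam0_nonneg v ⟨hw.1.trans hv.1.le, hv.2⟩) (Real.exp_nonneg _)
    have hIoiIoc : Set.Ioi w ∩ Set.Ioc s t = Set.Ioc w t := by
      ext x
      simp only [Set.mem_inter_iff, Set.mem_Ioi, Set.mem_Ioc]
      constructor
      · rintro ⟨h1, _, h3⟩; exact ⟨h1, h3⟩
      · rintro ⟨h1, h2⟩; exact ⟨h1, lt_of_le_of_lt hw.1 h1, h2⟩
    rw [hpre, hmeas_val, hftc, hIoc,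
      ofReal_integral_eq_lintegral_ofReal hint hnn,
      lintegral_indicator measurableSet_Ioi G, Measure.restrict_restrict measurableSet_Ioi,
      hIoiIoc]
  -- Step 3 : swap
  have hswap : (∫⁻ y1, ∫⁻ v in Set.Ioc s t, (Set.Ioi (τ1 y1)).indicator G v ∂volume ∂μ)
      = ∫⁻ v in Set.Ioc s t, ∫⁻ y1, (Set.Ioi (τ1 y1)).indicator G v ∂μ ∂volume := by
    refine lintegral_lintegral_swap ?_
    have huncurry : (Function.uncurry fun y1 v => (Set.Ioi (τ1 y1)).indicator G v)
        = ({q : ℝ × ℝ | τ1 q.1 < q.2}).indicator (fun q => G q.2) := by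
      funext q
      simp only [Function.uncurry, Set.indicator_apply, Set.mem_Ioi, Set.mem_setOf_eq]
    rw [huncurry]
    exact ((hmG.comp measurable_snd).indicator
      (measurableSet_lt (hmτ1.comp measurable_fst) measurable_snd)).aemeasurable
  -- Step 4 : inner integral over y1
  have step4 : ∀ v ∈ Set.Ioc s t, (∫⁻ y1, (Set.Ioi (τ1 y1)).indicator G v ∂μ)
      = G v * ENNReal.ofReal (Real.exp (-(∫ u in v..t, lam1 u))) := by
    intro v hv
    have hvIcc : v ∈ Set.Icc s t := ⟨hv.1.le, hv.2⟩
    set c := ∫ u in v..t, lam1 u with hc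
    have hc0 : 0 ≤ c := primNonneg hlam1_nonneg hvIcc
    have hpt : ∀ y1 : ℝ, (Set.Ioi (τ1 y1)).indicator G v
        = ({y : ℝ | τ1 y < v}).indicator (fun _ => G v) y1 := by
      intro y1
      simp only [Set.indicator_apply, Set.mem_Ioi, Set.mem_setOf_eq]
    have hsub1 : Set.Ioi c ⊆ {y : ℝ | τ1 y < v} :=
      fun y hy => ht_lt hst hlam1 hv hy
    have hsub2 : {y : ℝ | τ1 y < v} ⊆ Set.Ici c ∪ Set.Iio 0 := by
      intro y hy
      rcases lt_or_ge y 0 with h | h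
      · exact Or.inr h
      · refine Or.inl ?_
        by_contra hcc
        simp only [Set.mem_Ici, not_le] at hcc
        have := ht_gt hst' hlam1 hlam1_nonneg hvIcc h hcc
        exact absurd hy (by simp only [Set.mem_setOf_eq]; linarith)
    have hval : μ {y : ℝ | τ1 y < v} = ENNReal.ofReal (Real.exp (-c)) := by
      refine le_antisymm ?_ ?_
      · calc μ {y : ℝ | τ1 y < v} ≤ μ (Set.Ici c ∪ Set.Iio 0) := measure_mono hsub2
          _ ≤ μ (Set.Ici c) + μ (Set.Iio 0) := measure_union_le _ _
          _ = ENNReal.ofReal (Real.exp (-c)) := by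
              rw [hμdef, expM_Iio_zero, add_zero, expM_Ici hc0]
      · calc ENNReal.ofReal (Real.exp (-c)) = μ (Set.Ioi c) := by rw [hμdef, expM_Ioi hc0]
          _ ≤ μ {y : ℝ | τ1 y < v} := measure_mono hsub1
    simp_rw [hpt]
    rw [lintegral_indicator_const (measurableSet_lt hmτ1 measurable_const), hval]
  -- put things together
  rw [step1, Measure.prod_apply hE, lintegral_congr step2, hswap,
    setLIntegral_congr_fun_ae measurableSet_Ioc (ae_of_all _ step4)]
  -- Step 5 : final computation
  have hfin : ∀ v ∈ Set.Ioc s t, G v * ENNReal.ofReal (Real.exp (-(∫ u in v..t, lam1 u)))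
      = ENNReal.ofReal (Real.exp (-(∫ r in v..t, (lam0 r + lam1 r))) * lam0 v) := by
    intro v hv
    rw [hG, ← ENNReal.ofReal_mul
      (mul_nonneg (hlam0_nonneg v ⟨hv.1.le, hv.2⟩) (Real.exp_nonneg _))]
    congr 1
    rw [intervalIntegral.integral_add (hlam0.intervalIntegrable v t)
      (hlam1.intervalIntegrable v t), neg_add, Real.exp_add]
    ring
  rw [setLIntegral_congr_fun_ae measurableSet_Ioc (ae_of_all _ hfin)]
  have hint2 : IntegrableOn
      (fun v => Real.exp (-(∫ r in v..t, (lam0 r + lam1 r))) * lam0 v)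
      (Set.Ioc s t) volume := by
    have hcont : Continuous fun v => Real.exp (-(∫ r in v..t, (lam0 r + lam1 r))) * lam0 v :=
      (Real.continuous_exp.comp (primCont (hlam0.add hlam1) t).neg).mul hlam0
    exact hcont.integrableOn_Icc.mono_set Set.Ioc_subset_Icc_self
  have hnn2 : 0 ≤ᵐ[volume.restrict (Set.Ioc s t)]
      fun v => Real.exp (-(∫ r in v..t, (lam0 r + lam1 r))) * lam0 v := by
    refine (ae_restrict_iff' measurableSet_Ioc).mpr (ae_of_all _ fun v hv => ?_)
    exact mul_nonneg (Real.exp_nonneg _) (hlam0_nonneg v ⟨hv.1.le, hv.2⟩)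
  rw [← ofReal_integral_eq_lintegral_ofReal hint2 hnn2,
    intervalIntegral.integral_of_le hst']
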